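/- Let G be the unweighted 4-cycle and α = 2. Setting x_e = 1/2 on all four edges extends to a feasible fractional solution of the arc-based LP relaxation (AB) with K = E (sending half a unit of flow each way around the cycle for each terminal pair), giving objective value 2, whereas every feasible fractional solution of the path-based LP relaxation (PB) has objective value at least 3. Hence on this instance the LP relaxation of (AB) is strictly weaker than that of (PB). -/

import Mathlib

open scoped BigOperators

noncomputable section

variable {V : Type*}

/-- The weight of a walk: the sum of the (real) weights of its edges. -/
def walkWeight {G : SimpleGraph V} (w : Sym2 V → ℝ) {u v : V} (p : G.Walk u v) : ℝ :=
  (p.edges.map w).sum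

/-- `P_uv`: the set of `u`-`v` paths of weight at most the bound `B u v`. -/
def pathSet (G : SimpleGraph V) (w : Sym2 V → ℝ) (B : V → V → ℝ) (u v : V) :
    Set (G.Walk u v) := {p | p.IsPath ∧ walkWeight w p ≤ B u v}

/-- Feasibility for the LP relaxation of the path-based model (PB). -/
def PBFeasible (G : SimpleGraph V) (w : Sym2 V → ℝ) (K : Set (V × V)) (B : V → V → ℝ)
    (x : Sym2 V → ℝ) (y : ∀ u v : V, G.Walk u v → ℝ) : Prop :=
  (∀ e, 0 ≤ x e ∧ x e ≤ 1) ∧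
  (∀ (u v : V) (p : G.Walk u v), 0 ≤ y u v p ∧ y u v p ≤ 1) ∧
  (∀ uv ∈ K, 1 ≤ ∑ᶠ p ∈ pathSet G w B uv.1 uv.2, y uv.1 uv.2 p) ∧
  (∀ uv ∈ K, ∀ e : Sym2 V,
    ∑ᶠ p ∈ {p ∈ pathSet G w B uv.1 uv.2 | e ∈ p.edges}, y uv.1 uv.2 p ≤ x e)

/-- Feasibility for the LP relaxation of the arc-based multicommodity-flow model (AB). -/
def ABFeasible [Fintype V] [DecidableEq V] (G : SimpleGraph V) (w : Sym2 V → ℝ)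
    (K : Set (V × V)) (B : V → V → ℝ) (x : Sym2 V → ℝ) (f : V × V → V → V → ℝ) : Prop :=
  (∀ e, 0 ≤ x e ∧ x e ≤ 1) ∧
  (∀ uv i j, 0 ≤ f uv i j ∧ f uv i j ≤ 1) ∧
  (∀ uv ∈ K, ∀ i j : V, ¬ G.Adj i j → f uv i j = 0) ∧
  (∀ uv ∈ K, ∀ i : V,
    (∑ j, f uv i j) - (∑ j, f uv j i)
      = (if i = uv.1 then 1 else 0) - (if i = uv.2 then 1 else 0)) ∧
  (∀ uv ∈ K, ∀ i j : V, G.Adj i j → f uv i j + f uv j i ≤ x s(i, j)) ∧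
  (∀ uv ∈ K, ∑ i, ∑ j, w s(i, j) * f uv i j ≤ B uv.1 uv.2)

/-- The unweighted 4-cycle on `ZMod 4`. -/
def C4 : SimpleGraph (ZMod 4) := SimpleGraph.fromRel (fun i j => j = i + 1)

/- ### Auxiliary lemmas -/

lemma C4_adj (i j : ZMod 4) : C4.Adj i j ↔ i ≠ j ∧ (j = i + 1 ∨ i = j + 1) := by
  simp [C4]

lemma sum4 (g : ZMod 4 → ℝ) : ∑ i, g i = g 0 + g 1 + g 2 + g 3 := by
  show ∑ i : Fin 4, g i = _
  rw [Fin.sum_univ_four g]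
  rfl

lemma C4_edgeSet : C4.edgeSet
    = ↑({s(0,1), s(1,2), s(2,3), s(3,0)} : Finset (Sym2 (ZMod 4))) := by
  ext e
  induction e using Sym2.ind with
  | _ a b =>
    rw [SimpleGraph.mem_edgeSet, C4_adj]
    revert a b
    decide

/-- The arc-based fractional flow: for the pair `(u, u+1)` send `1/2` directly along the
arc `(u, u+1)` and `1/2` the long way around the cycle; symmetrically for `(u, u-1)`. -/
def fAB : ZMod 4 × ZMod 4 → ZMod 4 → ZMod 4 → ℝ := fun uv i j =>
  if uv.2 = uv.1 + 1 then
    (if (i = uv.1 ∧ j = uv.2) ∨ (i ≠ uv.2 ∧ j = i - 1) then 1/2 else 0)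
  else if uv.2 = uv.1 - 1 then
    (if (i = uv.1 ∧ j = uv.2) ∨ (i ≠ uv.2 ∧ j = i + 1) then 1/2 else 0)
  else 0

lemma zmod4_cases : ∀ a : ZMod 4, a = 0 ∨ a = 1 ∨ a = 2 ∨ a = 3 := by decide

lemma fAB_cons (u i : ZMod 4) :
    ((∑ j, fAB (u, u+1) i j) - (∑ j, fAB (u, u+1) j i)
      = (if i = u then (1:ℝ) else 0) - (if i = u + 1 then 1 else 0))
    ∧ ((∑ j, fAB (u, u-1) i j) - (∑ j, fAB (u, u-1) j i)
      = (if i = u then (1:ℝ) else 0) - (if i = u - 1 then 1 else 0)) := by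
  rcases zmod4_cases u with rfl | rfl | rfl | rfl <;>
    rcases zmod4_cases i with rfl | rfl | rfl | rfl <;>
    constructor <;> rw [sum4, sum4] <;> norm_num +decide [fAB]

lemma fAB_cap (u i j : ZMod 4) :
    (fAB (u, u+1) i j + fAB (u, u+1) j i ≤ 1/2)
    ∧ (fAB (u, u-1) i j + fAB (u, u-1) j i ≤ 1/2) := by
  rcases zmod4_cases u with rfl | rfl | rfl | rfl <;>
    rcases zmod4_cases i with rfl | rfl | rfl | rfl <;>
    rcases zmod4_cases j with rfl | rfl | rfl | rfl <;>
    constructor <;> norm_num +decide [fAB]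

lemma fAB_cost (u : ZMod 4) :
    (∑ i, ∑ j, (1:ℝ) * fAB (u, u+1) i j ≤ 2)
    ∧ (∑ i, ∑ j, (1:ℝ) * fAB (u, u-1) i j ≤ 2) := by
  rcases zmod4_cases u with rfl | rfl | rfl | rfl <;>
    constructor <;> simp only [sum4] <;> norm_num +decide [fAB]

lemma adj_succ : ∀ a : ZMod 4, C4.Adj a (a+1) := by simp only [C4_adj]; decide
lemma adj_pred : ∀ a : ZMod 4, C4.Adj a (a-1) := by simp only [C4_adj]; decide

lemma fAB_bounds (uv : ZMod 4 × ZMod 4) (i j : ZMod 4) :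
    0 ≤ fAB uv i j ∧ fAB uv i j ≤ 1 := by
  unfold fAB; split_ifs <;> norm_num

lemma fAB_nonadj (uv : ZMod 4 × ZMod 4) (i j : ZMod 4) (hn : ¬ C4.Adj i j) :
    fAB uv i j = 0 := by
  unfold fAB
  split_ifs with h1 h2 h3 h4 <;> try rfl
  · exfalso; apply hn
    rcases h2 with ⟨rfl, rfl⟩ | ⟨-, rfl⟩
    · rw [h1]; exact adj_succ _
    · exact adj_pred _
  · exfalso; apply hn
    rcases h4 with ⟨rfl, rfl⟩ | ⟨-, rfl⟩
    · rw [h3]; exact adj_pred _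
    · exact adj_succ _

lemma no_two_path : ∀ u a v : ZMod 4, C4.Adj u v → C4.Adj u a → C4.Adj a v → False := by
  simp only [C4_adj]; decide

lemma walkWeight_one {u v : ZMod 4} (p : C4.Walk u v) :
    walkWeight (fun _ => (1:ℝ)) p = p.length := by
  simp [walkWeight, List.map_const']

lemma path_mem_edge {u v : ZMod 4} (h : C4.Adj u v) (p : C4.Walk u v)
    (hw : walkWeight (fun _ => (1:ℝ)) p ≤ 2) : s(u,v) ∈ p.edges := by
  have hl : p.length ≤ 2 := by
    rw [walkWeight_one p] at hw
    exact_mod_cast hw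
  cases p with
  | nil => exact absurd rfl h.ne
  | cons h1 q =>
    cases q with
    | nil => simp
    | cons h2 r =>
      cases r with
      | nil => exact (no_two_path _ _ _ h h1 h2).elim
      | cons h3 s =>
        exfalso
        simp only [SimpleGraph.Walk.length_cons] at hl
        omega

/-- On the unweighted 4-cycle with `α = 2` and `K = E`: setting `x_e = 1/2` on every edge
extends to a feasible fractional (AB)-solution of objective value `2`, while every feasible
fractional (PB)-solution has objective value at least `3`. -/
theorem C4_AB_weaker_than_PB :
    (∃ (x : Sym2 (ZMod 4) → ℝ) (f : ZMod 4 × ZMod 4 → ZMod 4 → ZMod 4 → ℝ),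
      ABFeasible C4 (fun _ => (1 : ℝ)) {p | C4.Adj p.1 p.2} (fun _ _ => (2 : ℝ)) x f ∧
      (∀ e ∈ C4.edgeSet, x e = 1 / 2) ∧
      ∑ᶠ e ∈ C4.edgeSet, (1 : ℝ) * x e = 2) ∧
    (∀ (x : Sym2 (ZMod 4) → ℝ) (y : ∀ u v : ZMod 4, C4.Walk u v → ℝ),
      PBFeasible C4 (fun _ => (1 : ℝ)) {p | C4.Adj p.1 p.2} (fun _ _ => (2 : ℝ)) x y →
      3 ≤ ∑ᶠ e ∈ C4.edgeSet, (1 : ℝ) * x e) := by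
  constructor
  · refine ⟨fun _ => 1/2, fAB, ⟨?_, ?_, ?_, ?_, ?_, ?_⟩, ?_, ?_⟩
    · intro e; norm_num
    · intro uv i j; exact fAB_bounds uv i j
    · intro uv _ i j hn; exact fAB_nonadj uv i j hn
    · rintro ⟨u, v⟩ hK i
      rcases ((C4_adj u v).mp hK).2 with hv | hv
      · subst hv; exact (fAB_cons u i).1
      · have hv2 : v = u - 1 := eq_sub_of_add_eq hv.symm
        subst hv2; exact (fAB_cons u i).2
    · rintro ⟨u, v⟩ hK i j _
      rcases ((C4_adj u v).mp hK).2 with hv | hv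
      · subst hv; exact (fAB_cap u i j).1
      · have hv2 : v = u - 1 := eq_sub_of_add_eq hv.symm
        subst hv2; exact (fAB_cap u i j).2
    · rintro ⟨u, v⟩ hK
      rcases ((C4_adj u v).mp hK).2 with hv | hv
      · subst hv; exact (fAB_cost u).1
      · have hv2 : v = u - 1 := eq_sub_of_add_eq hv.symm
        subst hv2; exact (fAB_cost u).2
    · intro e _; rfl
    · rw [C4_edgeSet, finsum_mem_coe_finset,
        Finset.sum_insert (by decide), Finset.sum_insert (by decide),
        Finset.sum_insert (by decide), Finset.sum_singleton]
      norm_num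
  · intro x y hfeas
    obtain ⟨hx, hy, hcov, hcap⟩ := hfeas
    have key : ∀ u v : ZMod 4, C4.Adj u v → 1 ≤ x s(u,v) := by
      intro u v huv
      have h1 : 1 ≤ ∑ᶠ p ∈ pathSet C4 (fun _ => (1:ℝ)) (fun _ _ => (2:ℝ)) u v, y u v p :=
        hcov (u, v) huv
      have h2 : ∑ᶠ p ∈ {p ∈ pathSet C4 (fun _ => (1:ℝ)) (fun _ _ => (2:ℝ)) u v |
          s(u,v) ∈ p.edges}, y u v p ≤ x s(u,v) := hcap (u, v) huv s(u,v)
      have hset : {p ∈ pathSet C4 (fun _ => (1:ℝ)) (fun _ _ => (2:ℝ)) u v | s(u,v) ∈ p.edges}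
          = pathSet C4 (fun _ => (1:ℝ)) (fun _ _ => (2:ℝ)) u v := by
        apply Set.eq_of_subset_of_subset
        · intro p hp; exact hp.1
        · intro p hp; exact ⟨hp, path_mem_edge huv p hp.2⟩
      rw [hset] at h2
      exact le_trans h1 h2
    have k1 := key 0 1 (by rw [C4_adj]; decide)
    have k2 := key 1 2 (by rw [C4_adj]; decide)
    have k3 := key 2 3 (by rw [C4_adj]; decide)
    have k4 := key 3 0 (by rw [C4_adj]; decide)
    rw [C4_edgeSet, finsum_mem_coe_finset,
      Finset.sum_insert (by decide), Finset.sum_insert (by decide),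
      Finset.sum_insert (by decide), Finset.sum_singleton]
    linarith

end
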